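/- Let p > 0 and let g_p : [0,1/2] → [0,1], g_p(x) = x + 2^p x^{p+1}, with inverse g_p^{-1}. Define I(η) := ∫_η^1 dx / (x − g_p^{-1}(x)) for η ∈ (0,1]. Then lim_{η→0+} η^p · I(η) = 1/(p·2^p); equivalently, writing α := 1/p, I(η) ∼ α / (2^{1/α} η^{1/α}) as η → 0+. -/

import Mathlib

open Filter Set MeasureTheory

/-- The first (left) branch of the LSV map: `g_p(x) = x + 2^p x^(p+1)`. -/
noncomputable def lsvBranch (p : ℝ) (x : ℝ) : ℝ := x + 2 ^ p * x ^ (p + 1)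

lemma lsv_mono {p : ℝ} (hp : 0 < p) : StrictMonoOn (lsvBranch p) (Ici 0) := by
  intro x hx y hy hxy
  have h1 : x ^ (p+1) < y ^ (p+1) := Real.rpow_lt_rpow hx hxy (by linarith)
  have h2 : (0:ℝ) < 2 ^ p := Real.rpow_pos_of_pos two_pos p
  unfold lsvBranch
  nlinarith

lemma lsv_cont (p : ℝ) (hp : 0 < p) : Continuous (lsvBranch p) := by
  rw [continuous_iff_continuousAt]
  intro x
  exact continuousAt_id.add (continuousAt_const.mul
    (Real.continuousAt_rpow_const x (p+1) (Or.inr (by linarith))))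

lemma lsv_zero {p : ℝ} (hp : 0 < p) : lsvBranch p 0 = 0 := by
  unfold lsvBranch
  rw [Real.zero_rpow (by linarith)]
  ring

lemma lsv_half {p : ℝ} (hp : 0 < p) : lsvBranch p (1/2) = 1 := by
  unfold lsvBranch
  have h : (2:ℝ) ^ p * (1/2:ℝ) ^ (p+1) = 1/2 := by
    rw [Real.rpow_add (by norm_num : (0:ℝ) < 1/2), Real.rpow_one,
      ← mul_assoc, ← Real.mul_rpow (by norm_num) (by norm_num)]
    norm_num
  rw [h]; norm_num

lemma lsv_ge {p : ℝ} (hp : 0 < p) {x : ℝ} (hx : 0 ≤ x) : x ≤ lsvBranch p x := by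
  have h2 : (0:ℝ) < 2 ^ p := Real.rpow_pos_of_pos two_pos p
  have := Real.rpow_nonneg hx (p+1)
  unfold lsvBranch; nlinarith

section Ginv
variable {p : ℝ} (hp : 0 < p) {ginv : ℝ → ℝ}
  (hginv : ∀ x ∈ Icc (0 : ℝ) 1, ginv x ∈ Icc (0 : ℝ) (1 / 2) ∧ lsvBranch p (ginv x) = x)

include hp hginv

lemma ginv_mono : StrictMonoOn ginv (Icc 0 1) := by
  intro x hx y hy hxy
  rcases hginv x hx with ⟨hmx, hfx⟩
  rcases hginv y hy with ⟨hmy, hfy⟩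
  by_contra h
  push_neg at h
  rcases eq_or_lt_of_le h with h | h
  · rw [← hfx, ← hfy, h] at hxy; exact lt_irrefl _ hxy
  · have := lsv_mono hp (mem_Ici.2 hmy.1) (mem_Ici.2 hmx.1) h
    rw [hfx, hfy] at this; linarith

lemma ginv_sect {y : ℝ} (hy : y ∈ Icc (0:ℝ) (1/2)) : ginv (lsvBranch p y) = y := by
  have hx : lsvBranch p y ∈ Icc (0:ℝ) 1 := by
    constructor
    · have := lsv_ge hp hy.1; have := hy.1; linarith
    · have := (lsv_mono hp).monotoneOn (mem_Ici.2 hy.1)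
        (mem_Ici.2 (by norm_num : (0:ℝ) ≤ 1/2)) hy.2
      rw [lsv_half hp] at this; exact this
  rcases hginv _ hx with ⟨hm, hf⟩
  exact (lsv_mono hp).injOn (mem_Ici.2 hm.1) (mem_Ici.2 hy.1) hf

lemma ginv_one : ginv 1 = 1/2 := by
  have := ginv_sect hp hginv (by constructor <;> norm_num : (1/2:ℝ) ∈ Icc (0:ℝ) (1/2))
  rwa [lsv_half hp] at this

lemma ginv_pos {x : ℝ} (hx : x ∈ Icc (0:ℝ) 1) (hx0 : 0 < x) : 0 < ginv x := by
  rcases hginv x hx with ⟨hm, hf⟩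
  rcases eq_or_lt_of_le hm.1 with h | h
  · rw [← h, lsv_zero hp] at hf; linarith
  · exact h

lemma ginv_le {x : ℝ} (hx : x ∈ Icc (0:ℝ) 1) : ginv x ≤ x := by
  rcases hginv x hx with ⟨hm, hf⟩
  have := lsv_ge hp hm.1
  linarith

end Ginv

section Ginv2
variable {p : ℝ} (hp : 0 < p) {ginv : ℝ → ℝ}
  (hginv : ∀ x ∈ Icc (0 : ℝ) 1, ginv x ∈ Icc (0 : ℝ) (1 / 2) ∧ lsvBranch p (ginv x) = x)

include hp hginv

lemma ginv_key {x : ℝ} (hx : x ∈ Icc (0:ℝ) 1) :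
    x - ginv x = 2 ^ p * (ginv x) ^ (p+1) := by
  rcases hginv x hx with ⟨_, hf⟩
  unfold lsvBranch at hf; linarith

lemma ginv_half_le {x : ℝ} (hx : x ∈ Icc (0:ℝ) 1) : x ≤ 2 * ginv x := by
  rcases hginv x hx with ⟨hm, hf⟩
  rcases eq_or_lt_of_le hm.1 with h | h
  · rw [← h, lsv_zero hp] at hf; linarith
  · have key : (ginv x) ^ (p+1) = ginv x * (ginv x) ^ p := by
      rw [Real.rpow_add h, Real.rpow_one, mul_comm]
    have h2 : (2:ℝ) ^ p * (ginv x) ^ p ≤ 1 := by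
      rw [← Real.mul_rpow (by norm_num) hm.1]
      calc (2 * ginv x) ^ p ≤ 1 ^ p := by
            apply Real.rpow_le_rpow (by linarith) (by linarith [hm.2]) hp.le
        _ = 1 := Real.one_rpow p
    unfold lsvBranch at hf
    rw [key] at hf
    nlinarith [hm.1]

lemma ginv_contOn : ContinuousOn ginv (Icc 0 1) := by
  have hmono := ginv_mono hp hginv
  have hR : ∀ a : ℝ, 0 ≤ a → a < 1 → ContinuousWithinAt ginv (Ici a) a := by
    intro a ha0 ha1
    have haI : a ∈ Icc (0:ℝ) 1 := ⟨ha0, ha1.le⟩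
    apply hmono.continuousWithinAt_right_of_exists_between
    · exact mem_nhdsWithin.mpr ⟨Iio 1, isOpen_Iio, ha1,
        fun x hx => ⟨le_trans ha0 hx.2, hx.1.le⟩⟩
    · intro b hb
      have hlt : ginv a < 1/2 := by
        have := hmono haI (by constructor <;> norm_num) ha1
        rwa [ginv_one hp hginv] at this
      have hy : min b (1/2) ∈ Icc (0:ℝ) (1/2) :=
        ⟨le_min (le_trans (hginv a haI).1.1 hb.le) (by norm_num), min_le_right _ _⟩
      refine ⟨lsvBranch p (min b (1/2)), ?_, ?_⟩
      · constructor
        · linarith [lsv_ge hp hy.1, hy.1]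
        · have := (lsv_mono hp).monotoneOn (mem_Ici.2 hy.1)
            (mem_Ici.2 (by norm_num : (0:ℝ) ≤ 1/2)) hy.2
          rwa [lsv_half hp] at this
      · rw [ginv_sect hp hginv hy]
        exact ⟨lt_min hb hlt, min_le_left _ _⟩
  have hL : ∀ a : ℝ, 0 < a → a ≤ 1 → ContinuousWithinAt ginv (Iic a) a := by
    intro a ha0 ha1
    have haI : a ∈ Icc (0:ℝ) 1 := ⟨ha0.le, ha1⟩
    apply hmono.continuousWithinAt_left_of_exists_between
    · exact mem_nhdsWithin.mpr ⟨Ioi 0, isOpen_Ioi, ha0,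
        fun x hx => ⟨hx.1.le, le_trans hx.2 ha1⟩⟩
    · intro b hb
      have hpos : 0 < ginv a := ginv_pos hp hginv haI ha0
      have hy : max b 0 ∈ Icc (0:ℝ) (1/2) :=
        ⟨le_max_right _ _, max_le (le_trans hb.le (hginv a haI).1.2) (by norm_num)⟩
      refine ⟨lsvBranch p (max b 0), ?_, ?_⟩
      · constructor
        · linarith [lsv_ge hp hy.1, hy.1]
        · have := (lsv_mono hp).monotoneOn (mem_Ici.2 hy.1)
            (mem_Ici.2 (by norm_num : (0:ℝ) ≤ 1/2)) hy.2
          rwa [lsv_half hp] at this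
      · rw [ginv_sect hp hginv hy]
        exact ⟨le_max_left _ _, max_lt hb hpos⟩
  intro a ha
  rcases lt_or_eq_of_le ha.2 with h1 | h1
  · rcases eq_or_lt_of_le ha.1 with h0 | h0
    · exact (hR a ha.1 h1).mono (fun x hx => le_trans (le_of_eq h0.symm) hx.1)
    · exact ((hR a ha.1 h1).union (hL a h0 ha.2)).mono
        (fun x _ => (le_total a x).elim (fun h => Or.inl h) (fun h => Or.inr h))
  · exact (hL a (by rw [h1]; norm_num) ha.2).mono (fun x hx => by rw [h1]; exact hx.2)

end Ginv2

section Int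
variable {p : ℝ} (hp : 0 < p) {ginv : ℝ → ℝ}
  (hginv : ∀ x ∈ Icc (0 : ℝ) 1, ginv x ∈ Icc (0 : ℝ) (1 / 2) ∧ lsvBranch p (ginv x) = x)

include hp hginv

lemma integral_eq {η : ℝ} (hη : η ∈ Ioo (0:ℝ) 1) :
    ∫ x in η..1, 1/(x - ginv x) =
      (1/2^p) * (((1/2:ℝ)^(-p) - (ginv η)^(-p))/(-p))
        + (p+1) * Real.log ((1/2)/(ginv η)) := by
  have hηI : η ∈ Icc (0:ℝ) 1 := ⟨hη.1.le, hη.2.le⟩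
  set a := ginv η with ha
  have ha0 : 0 < a := ginv_pos hp hginv hηI hη.1
  have ha2 : a ≤ 1/2 := (hginv η hηI).1.2
  have h2 : (0:ℝ) < 2 ^ p := Real.rpow_pos_of_pos two_pos p
  have huIcc : uIcc a (1/2:ℝ) = Icc a (1/2) := uIcc_of_le ha2
  -- substitution
  have hsub : ∫ y in a..(1/2:ℝ),
      ((fun x => 1/(x - ginv x)) ∘ lsvBranch p) y * (1 + 2^p * ((p+1) * y ^ p)) =
      ∫ x in η..1, 1/(x - ginv x) := by
    have := intervalIntegral.integral_comp_mul_deriv'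
      (a := a) (b := (1/2:ℝ)) (f := lsvBranch p)
      (f' := fun y => 1 + 2^p * ((p+1) * y ^ p)) (g := fun x => 1/(x - ginv x))
      ?_ ?_ ?_
    · rw [(hginv η hηI).2, lsv_half hp] at this; exact this
    · intro y hy
      rw [huIcc] at hy
      have hy0 : 0 < y := lt_of_lt_of_le ha0 hy.1
      have h1 : HasDerivAt (fun y : ℝ => y ^ (p+1)) ((p+1) * y ^ (p+1-1)) y :=
        Real.hasDerivAt_rpow_const (Or.inl hy0.ne')
      rw [add_sub_cancel_right] at h1
      exact (hasDerivAt_id y).add (h1.const_mul (2^p))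
    · apply Continuous.continuousOn
      rw [continuous_iff_continuousAt]
      intro y
      exact continuousAt_const.add (continuousAt_const.mul (continuousAt_const.mul
        (Real.continuousAt_rpow_const y p (Or.inr hp.le))))
    · have himg : lsvBranch p '' (uIcc a (1/2:ℝ)) ⊆ Icc η 1 := by
        rw [huIcc]
        rintro x ⟨y, hy, rfl⟩
        have hy0 : 0 ≤ y := le_trans ha0.le hy.1
        constructor
        · have := (lsv_mono hp).monotoneOn (mem_Ici.2 ha0.le) (mem_Ici.2 hy0) hy.1
          rwa [(hginv η hηI).2] at this
        · have := (lsv_mono hp).monotoneOn (mem_Ici.2 hy0)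
            (mem_Ici.2 (by norm_num : (0:ℝ) ≤ 1/2)) hy.2
          rwa [lsv_half hp] at this
      apply ContinuousOn.mono _ himg
      apply ContinuousOn.div continuousOn_const
      · exact continuousOn_id.sub ((ginv_contOn hp hginv).mono
          (Icc_subset_Icc hη.1.le le_rfl))
      · intro x hx
        have hxI : x ∈ Icc (0:ℝ) 1 := ⟨le_trans hη.1.le hx.1, hx.2⟩
        have hgx : 0 < ginv x := ginv_pos hp hginv hxI (lt_of_lt_of_le hη.1 hx.1)
        rw [ginv_key hp hginv hxI]
        positivity
  rw [← hsub]
  -- rewrite the integrand in closed form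
  have hcongr : ∫ y in a..(1/2:ℝ),
      ((fun x => 1/(x - ginv x)) ∘ lsvBranch p) y * (1 + 2^p * ((p+1) * y ^ p)) =
      ∫ y in a..(1/2:ℝ), ((1/2^p) * y ^ (-(p+1)) + (p+1) * (1/y)) := by
    apply intervalIntegral.integral_congr
    intro y hy
    rw [huIcc] at hy
    have hy0 : 0 < y := lt_of_lt_of_le ha0 hy.1
    have hyp : (0:ℝ) < y ^ p := Real.rpow_pos_of_pos hy0 p
    have hyI : y ∈ Icc (0:ℝ) (1/2) := ⟨hy0.le, hy.2⟩
    have key : ginv (lsvBranch p y) = y := ginv_sect hp hginv hyI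
    have hden : lsvBranch p y - ginv (lsvBranch p y) = 2^p * y^(p+1) := by
      rw [key]; unfold lsvBranch; ring
    simp only [Function.comp_apply, hden]
    have hsplit : y ^ (p+1) = y ^ p * y := by
      rw [Real.rpow_add hy0, Real.rpow_one]
    have hneg : y ^ (-(p+1)) = (y ^ p * y)⁻¹ := by
      rw [Real.rpow_neg hy0.le, hsplit]
    rw [hsplit, hneg]
    field_simp
  rw [hcongr]
  -- evaluate
  have hne : (0:ℝ) ∉ uIcc a (1/2:ℝ) := by
    rw [huIcc]; rintro ⟨h1, _⟩; linarith
  have hi1 : IntervalIntegrable (fun y : ℝ => (1/2^p) * y ^ (-(p+1))) volume a (1/2) := by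
    apply ContinuousOn.intervalIntegrable
    apply ContinuousOn.mul continuousOn_const
    intro y hy
    have hy0 : 0 < y := by rw [huIcc] at hy; exact lt_of_lt_of_le ha0 hy.1
    exact (Real.continuousAt_rpow_const y _ (Or.inl hy0.ne')).continuousWithinAt
  have hi2 : IntervalIntegrable (fun y : ℝ => (p+1) * (1/y)) volume a (1/2) := by
    apply ContinuousOn.intervalIntegrable
    apply ContinuousOn.mul continuousOn_const
    apply ContinuousOn.div continuousOn_const continuousOn_id
    intro y hy
    rw [huIcc] at hy
    exact (lt_of_lt_of_le ha0 hy.1).ne'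
  have hne1 : -(p+1) ≠ -1 := by intro h; apply hp.ne'; linarith [neg_injective h]
  rw [intervalIntegral.integral_add hi1 hi2,
    intervalIntegral.integral_const_mul, intervalIntegral.integral_const_mul,
    integral_rpow (Or.inr ⟨hne1, hne⟩),
    integral_one_div hne]
  have : -(p+1)+1 = -p := by ring
  rw [this]

end Int

theorem stmt8 (p : ℝ) (hp : 0 < p) (ginv : ℝ → ℝ)
    (hginv : ∀ x ∈ Icc (0 : ℝ) 1, ginv x ∈ Icc (0 : ℝ) (1 / 2) ∧ lsvBranch p (ginv x) = x) :
    Tendsto (fun η => η ^ p * ∫ x in η..1, 1 / (x - ginv x))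
      (nhdsWithin 0 (Ioi 0)) (nhds (1 / (p * 2 ^ p))) := by
  have h2 : (0:ℝ) < 2 ^ p := Real.rpow_pos_of_pos two_pos p
  have hIoo : Ioo (0:ℝ) 1 ∈ nhdsWithin (0:ℝ) (Ioi 0) :=
    Ioo_mem_nhdsGT_of_mem ⟨le_refl 0, one_pos⟩
  set G : ℝ → ℝ := fun η =>
    (1 + 2^p * (ginv η)^p)^p / (p*2^p)
      - (η^p * (1/2:ℝ)^(-p)) / (p*2^p)
      + (p+1) * (η^p * Real.log (1/2) - η^p * Real.log (ginv η)) with hG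
  have heq : ∀ η ∈ Ioo (0:ℝ) 1,
      η ^ p * ∫ x in η..1, 1 / (x - ginv x) = G η := by
    intro η hη
    have hηI : η ∈ Icc (0:ℝ) 1 := ⟨hη.1.le, hη.2.le⟩
    have ha0 : 0 < ginv η := ginv_pos hp hginv hηI hη.1
    have hap : (0:ℝ) < (ginv η) ^ p := Real.rpow_pos_of_pos ha0 p
    rw [integral_eq hp hginv hη]
    have hfac : η = ginv η * (1 + 2^p * (ginv η)^p) := by
      have hk := ginv_key hp hginv hηI
      have : (ginv η) ^ (p+1) = ginv η * (ginv η) ^ p := by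
        rw [Real.rpow_add ha0, Real.rpow_one, mul_comm]
      rw [this] at hk; ring_nf; ring_nf at hk; linarith
    have hA : η^p * (ginv η)^(-p) = (1 + 2^p * (ginv η)^p)^p := by
      have h1 : η ^ p = (ginv η)^p * (1 + 2^p * (ginv η)^p)^p := by
        rw [← Real.mul_rpow ha0.le (by positivity), ← hfac]
      rw [h1, Real.rpow_neg ha0.le]
      field_simp
    have hlog : Real.log ((1/2)/(ginv η)) = Real.log (1/2) - Real.log (ginv η) :=
      Real.log_div (by norm_num) ha0.ne'
    rw [hlog, hG]
    field_simp
    linear_combination hA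
  have htginv : Tendsto ginv (nhdsWithin (0:ℝ) (Ioi 0)) (nhds 0) := by
    apply tendsto_of_tendsto_of_tendsto_of_le_of_le' tendsto_const_nhds
      (tendsto_id.mono_left nhdsWithin_le_nhds)
    · filter_upwards [hIoo] with η hη
      exact (hginv η ⟨hη.1.le, hη.2.le⟩).1.1
    · filter_upwards [hIoo] with η hη
      exact ginv_le hp hginv ⟨hη.1.le, hη.2.le⟩
  have hrp0 : Tendsto (fun t : ℝ => t ^ p) (nhds 0) (nhds 0) := by
    have := (Real.continuousAt_rpow_const 0 p (Or.inr hp.le)).tendsto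
    rwa [Real.zero_rpow hp.ne'] at this
  have hηp : Tendsto (fun η : ℝ => η ^ p) (nhdsWithin (0:ℝ) (Ioi 0)) (nhds 0) :=
    hrp0.comp (tendsto_id.mono_left nhdsWithin_le_nhds)
  have hgp : Tendsto (fun η : ℝ => (ginv η) ^ p) (nhdsWithin (0:ℝ) (Ioi 0)) (nhds 0) :=
    hrp0.comp htginv
  -- term 1
  have ht1 : Tendsto (fun η => (1 + 2^p * (ginv η)^p)^p / (p*2^p))
      (nhdsWithin (0:ℝ) (Ioi 0)) (nhds (1/(p*2^p))) := by
    have hbase : Tendsto (fun η => 1 + 2^p * (ginv η)^p)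
        (nhdsWithin (0:ℝ) (Ioi 0)) (nhds 1) := by
      have h := (hgp.const_mul ((2:ℝ)^p)).const_add (1:ℝ)
      simpa using h
    have hc : Tendsto (fun t : ℝ => t ^ p) (nhds 1) (nhds 1) := by
      have := (Real.continuousAt_rpow_const 1 p (Or.inl one_ne_zero)).tendsto
      rwa [Real.one_rpow] at this
    exact (hc.comp hbase).div_const _
  -- term 2
  have ht2 : Tendsto (fun η => (η^p * (1/2:ℝ)^(-p)) / (p*2^p))
      (nhdsWithin (0:ℝ) (Ioi 0)) (nhds 0) := by
    have := (hηp.mul_const ((1/2:ℝ)^(-p))).div_const (p*2^p)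
    simpa using this
  -- term 3
  have hlogt : Tendsto (fun η : ℝ => η^p * Real.log η)
      (nhdsWithin (0:ℝ) (Ioi 0)) (nhds 0) := by
    have := tendsto_log_mul_rpow_nhdsGT_zero hp
    exact this.congr (fun x => mul_comm _ _)
  have ht3 : Tendsto (fun η => η^p * Real.log (ginv η))
      (nhdsWithin (0:ℝ) (Ioi 0)) (nhds 0) := by
    refine tendsto_of_tendsto_of_tendsto_of_le_of_le'
      (g := fun η : ℝ => η^p * Real.log η - η^p * Real.log 2) ?_ hlogt ?_ ?_
    · simpa using hlogt.sub (hηp.mul_const (Real.log 2))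
    · filter_upwards [hIoo] with η hη
      have hηI : η ∈ Icc (0:ℝ) 1 := ⟨hη.1.le, hη.2.le⟩
      have ha0 : 0 < ginv η := ginv_pos hp hginv hηI hη.1
      have hlb : Real.log η - Real.log 2 ≤ Real.log (ginv η) := by
        have h1 : η/2 ≤ ginv η := by linarith [ginv_half_le hp hginv hηI]
        have := Real.log_le_log (by have := hη.1; linarith : (0:ℝ) < η/2) h1
        rwa [Real.log_div (ne_of_gt hη.1) (by norm_num)] at this
      have hppos : (0:ℝ) ≤ η ^ p := (Real.rpow_pos_of_pos hη.1 p).le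
      nlinarith [mul_le_mul_of_nonneg_left hlb hppos]
    · filter_upwards [hIoo] with η hη
      have hηI : η ∈ Icc (0:ℝ) 1 := ⟨hη.1.le, hη.2.le⟩
      have ha0 : 0 < ginv η := ginv_pos hp hginv hηI hη.1
      have hub : Real.log (ginv η) ≤ Real.log η :=
        Real.log_le_log ha0 (ginv_le hp hginv hηI)
      have hppos : (0:ℝ) ≤ η ^ p := (Real.rpow_pos_of_pos hη.1 p).le
      exact mul_le_mul_of_nonneg_left hub hppos
  have ht3' : Tendsto (fun η => (p+1) * (η^p * Real.log (1/2) - η^p * Real.log (ginv η)))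
      (nhdsWithin (0:ℝ) (Ioi 0)) (nhds 0) := by
    have := (((hηp.mul_const (Real.log (1/2))).sub ht3).const_mul (p+1))
    simpa using this
  have hGt : Tendsto G (nhdsWithin (0:ℝ) (Ioi 0)) (nhds (1/(p*2^p))) := by
    have := (ht1.sub ht2).add ht3'
    simpa only [sub_zero, add_zero] using this
  apply hGt.congr'
  filter_upwards [hIoo] with η hη
  exact (heq η hη).symm
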